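/- For the β = -1 beta-splitting model with w(n) = (n-1)!, the normalization satisfies Z(n) = Σ_{k=1}^{n-1} C(n-1,k-1)(k-1)!(n-k-1)! = (n-1)! Σ_{j=1}^{n-1} 1/j, and the rate sequence with λ_2 = 1 is λ_n = Σ_{j=1}^{n-1} 1/j (harmonic numbers). -/

import Mathlib

open Finset

private lemma myHarmonicPos (m : ℕ) (hm : 1 ≤ m) :
    0 < ∑ j ∈ Finset.Icc 1 m, (1 : ℝ) / (j : ℝ) := by
  apply Finset.sum_pos
  · intro j hj
    simp only [Finset.mem_Icc] at hj
    have : (0 : ℝ) < (j : ℝ) := by exact_mod_cast lt_of_lt_of_le Nat.zero_lt_one hj.1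
    positivity
  · exact ⟨1, by simp [hm]⟩

private lemma Zsum (n : ℕ) (hn : 2 ≤ n) :
    (∑ k ∈ Finset.Icc 1 (n - 1),
      ((n - 1).choose (k - 1) : ℝ) * ((k - 1).factorial : ℝ) * ((n - k - 1).factorial : ℝ))
    = ((n - 1).factorial : ℝ) * ∑ j ∈ Finset.Icc 1 (n - 1), (1 : ℝ) / (j : ℝ) := by
  rw [Finset.mul_sum]
  refine Finset.sum_nbij' (fun k => n - k) (fun j => n - j) ?_ ?_ ?_ ?_ ?_
  · intro a ha; simp only [Finset.mem_Icc] at *; omega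
  · intro a ha; simp only [Finset.mem_Icc] at *; omega
  · intro a ha; simp only [Finset.mem_Icc] at ha; omega
  · intro a ha; simp only [Finset.mem_Icc] at ha; omega
  · intro k hk
    simp only [Finset.mem_Icc] at hk
    have hnat : (n-1).choose (k-1) * (k-1).factorial * (n-k-1).factorial * (n - k)
        = (n-1).factorial := by
      have h1 : k - 1 ≤ n - 1 := by omega
      have h := Nat.choose_mul_factorial_mul_factorial h1
      have h2 : (n-1) - (k-1) = (n-k-1) + 1 := by omega
      rw [h2, Nat.factorial_succ, show n-k-1+1 = n-k from by omega] at h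
      rw [← h]; ring
    have hnk : (0 : ℝ) < ((n - k : ℕ) : ℝ) := by
      have : 0 < n - k := by omega
      exact_mod_cast this
    field_simp
    exact_mod_cast hnat

/-- for the β = -1 model (`w n = (n-1)!`),
`Z n = (n-1)! Σ_{j=1}^{n-1} 1/j` and the rate sequence with `λ_2 = 1` is the
harmonic number `λ_n = Σ_{j=1}^{n-1} 1/j`. -/
theorem beta_minus_one_model_rates
    (Z : ℕ → ℝ)
    (hZ : ∀ n : ℕ, 2 ≤ n →
      Z n = ∑ k ∈ Finset.Icc 1 (n - 1),
        ((n - 1).choose (k - 1) : ℝ) * ((k - 1).factorial : ℝ) * ((n - k - 1).factorial : ℝ))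
    (p : ℕ → ℕ → ℝ)
    (hp : ∀ i j : ℕ, 1 ≤ i → 1 ≤ j →
      p i j = ((i - 1).factorial : ℝ) * ((j - 1).factorial : ℝ) / Z (i + j))
    (lam : ℕ → ℝ) (hlam2 : lam 2 = 1)
    (hrate : ∀ n : ℕ, 2 ≤ n → lam (n + 1) * (1 - p n 1) = lam n) :
    ∀ n : ℕ, 2 ≤ n →
      Z n = (((n : ℕ) - 1).factorial : ℝ) * ∑ j ∈ Finset.Icc 1 (n - 1), (1 : ℝ) / (j : ℝ) ∧
      lam n = ∑ j ∈ Finset.Icc 1 (n - 1), (1 : ℝ) / (j : ℝ) := by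
  have ZH : ∀ n : ℕ, 2 ≤ n →
      Z n = ((n - 1).factorial : ℝ) * ∑ j ∈ Finset.Icc 1 (n - 1), (1 : ℝ) / (j : ℝ) :=
    fun n hn => (hZ n hn).trans (Zsum n hn)
  have lamH : ∀ n : ℕ, 2 ≤ n → lam n = ∑ j ∈ Finset.Icc 1 (n - 1), (1 : ℝ) / (j : ℝ) := by
    intro n hn
    induction n, hn using Nat.le_induction with
    | base => simpa using hlam2
    | succ n hn ih =>
      set H : ℕ → ℝ := fun m => ∑ j ∈ Finset.Icc 1 m, (1 : ℝ) / (j : ℝ) with hHdef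
      have hHpos : 0 < H n := myHarmonicPos n (by omega)
      have hHpos' : 0 < H (n - 1) := myHarmonicPos (n-1) (by omega)
      have hHsucc : H n = H (n - 1) + 1 / (n : ℝ) := by
        have h1 : n = (n - 1) + 1 := by omega
        rw [hHdef]
        simp only
        rw [show Finset.Icc 1 n = Finset.Icc 1 ((n-1)+1) from by rw [← h1]]
        rw [Finset.sum_Icc_succ_top (by omega)]
        rw [← h1]
      have hZn1 : Z (n + 1) = ((n).factorial : ℝ) * H n := ZH (n + 1) (by omega)
      have hfac : ((n).factorial : ℝ) = (n : ℝ) * ((n-1).factorial : ℝ) := by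
        have h1 : n = (n - 1) + 1 := by omega
        rw [h1, Nat.factorial_succ]; push_cast; ring
      have hnpos : (0 : ℝ) < (n : ℝ) := by exact_mod_cast (by omega : 0 < n)
      have hp1 : p n 1 = ((n-1).factorial : ℝ) / Z (n + 1) := by
        have := hp n 1 (by omega) le_rfl
        simpa using this
      have hfacpos : (0 : ℝ) < ((n-1).factorial : ℝ) := by
        exact_mod_cast (n-1).factorial_pos
      have hone : 1 - p n 1 = H (n - 1) / H n := by
        rw [hp1, hZn1, hfac]
        rw [hHsucc]
        field_simp
        ring
      have key := hrate n hn
      rw [hone, ih] at key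
      have hne : H n ≠ 0 := ne_of_gt hHpos
      have hne' : H (n - 1) ≠ 0 := ne_of_gt hHpos'
      have key' : lam (n + 1) * (H (n - 1) / H n) = H (n - 1) := key
      have h2 : lam (n + 1) * (H (n - 1) / H n) * H n = H (n - 1) * H n := by
        rw [key']
      rw [mul_assoc, div_mul_cancel₀ _ hne, mul_comm (H (n - 1))] at h2
      exact mul_right_cancel₀ hne' h2
  intro n hn
  exact ⟨ZH n hn, lamH n hn⟩
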